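/- Let g : ℝᵈ → ℝ be convex and L-smooth, let x* be a global minimizer of g, and let λ ∈ (0, 2/L) with α := λL. Then for any x, the gradient step z = x − λ∇g(x) satisfies ‖x − z‖ ≤ √(α/(2 − α))·‖x − x*‖. -/

import Mathlib

open Set intervalIntegral

variable {d : ℕ}

local notation "⟪" x ", " y "⟫" => @inner ℝ _ _ x y

/-- Descent lemma. -/
lemma descent {d : ℕ} (g : EuclideanSpace ℝ (Fin d) → ℝ)
    (g' : EuclideanSpace ℝ (Fin d) → EuclideanSpace ℝ (Fin d)) (L : ℝ) (hL : 0 ≤ L)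
    (hgrad : ∀ x, HasGradientAt g (g' x) x)
    (hlip : LipschitzWith L.toNNReal g')
    (x y : EuclideanSpace ℝ (Fin d)) :
    g y ≤ g x + ⟪g' x, y - x⟫ + L / 2 * ‖y - x‖ ^ 2 := by
  set v := y - x with hv
  have hline : ∀ t : ℝ, HasDerivAt (fun t : ℝ => g (x + t • v)) ⟪g' (x + t • v), v⟫ t := by
    intro t
    have h1 : HasDerivAt (fun t : ℝ => x + t • v) v t := by
      simpa using ((hasDerivAt_id t).smul_const v).const_add x
    have h2 := ((hgrad (x + t • v)).hasFDerivAt.comp_hasDerivAt t h1)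
    simp at h2; exact h2
  have hcont : Continuous fun t : ℝ => ⟪g' (x + t • v), v⟫ := by
    apply Continuous.inner
    · exact hlip.continuous.comp (by continuity)
    · exact continuous_const
  have hFTC : g (x + (1:ℝ) • v) - g (x + (0:ℝ) • v)
      = ∫ t in (0:ℝ)..1, ⟪g' (x + t • v), v⟫ := by
    rw [intervalIntegral.integral_eq_sub_of_hasDerivAt (fun t _ => hline t)
      (hcont.intervalIntegrable 0 1)]
  have hbound : ∀ t ∈ Set.Icc (0:ℝ) 1,
      ⟪g' (x + t • v), v⟫ ≤ ⟪g' x, v⟫ + L * t * ‖v‖ ^ 2 := by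
    intro t ht
    have : ⟪g' (x + t • v) - g' x, v⟫ ≤ L * t * ‖v‖ ^ 2 := by
      calc ⟪g' (x + t • v) - g' x, v⟫ ≤ ‖g' (x + t • v) - g' x‖ * ‖v‖ :=
            real_inner_le_norm _ _
        _ ≤ (L * (t * ‖v‖)) * ‖v‖ := by
            gcongr
            have := hlip.dist_le_mul (x + t • v) x
            rw [dist_eq_norm] at this
            simpa [norm_smul, abs_of_nonneg ht.1, Real.coe_toNNReal L hL, mul_assoc]
              using this
        _ = L * t * ‖v‖ ^ 2 := by ring
    have := add_le_add_right this ⟪g' x, v⟫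
    rw [inner_sub_left] at this
    linarith
  have hint : (∫ t in (0:ℝ)..1, ⟪g' (x + t • v), v⟫)
      ≤ ∫ t in (0:ℝ)..1, (⟪g' x, v⟫ + L * t * ‖v‖ ^ 2) := by
    apply intervalIntegral.integral_mono_on (by norm_num)
      (hcont.intervalIntegrable 0 1)
      ((by continuity : Continuous fun t : ℝ => ⟪g' x, v⟫ + L * t * ‖v‖ ^ 2).intervalIntegrable 0 1)
    exact hbound
  have hval : (∫ t in (0:ℝ)..1, (⟪g' x, v⟫ + L * t * ‖v‖ ^ 2))
      = ⟪g' x, v⟫ + L / 2 * ‖v‖ ^ 2 := by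
    have : (fun t : ℝ => ⟪g' x, v⟫ + L * t * ‖v‖ ^ 2)
        = fun t : ℝ => ⟪g' x, v⟫ + (L * ‖v‖ ^ 2) * t := by
      funext t; ring
    rw [this, intervalIntegral.integral_add (intervalIntegrable_const)
      ((intervalIntegrable_id).const_mul _), intervalIntegral.integral_const_mul, integral_id]
    simp
    ring
  have h0 : x + (0:ℝ) • v = x := by simp
  have h1 : x + (1:ℝ) • v = y := by simp [hv]
  rw [h0, h1] at hFTC
  linarith [hint.trans_eq hval, hFTC]

theorem stmt6 {d : ℕ} (g : EuclideanSpace ℝ (Fin d) → ℝ)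
    (g' : EuclideanSpace ℝ (Fin d) → EuclideanSpace ℝ (Fin d))
    (L lam α : ℝ) (hL : 0 < L) (hlam : 0 < lam) (hlam2 : lam < 2 / L)
    (hα : α = lam * L)
    (hgconv : ConvexOn ℝ univ g)
    (hgrad : ∀ x, HasGradientAt g (g' x) x)
    (hlip : LipschitzWith L.toNNReal g')
    (xstar : EuclideanSpace ℝ (Fin d)) (hmin : ∀ y, g xstar ≤ g y)
    (x : EuclideanSpace ℝ (Fin d)) :
    ‖x - (x - lam • g' x)‖ ≤ Real.sqrt (α / (2 - α)) * ‖x - xstar‖ := by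
  have hα0 : 0 < α := hα ▸ mul_pos hlam hL
  have hα2 : α < 2 := by
    rw [hα]
    calc lam * L < (2 / L) * L := by gcongr
      _ = 2 := by field_simp
  have h2α : 0 < 2 - α := by linarith
  -- gradient at minimizer is zero
  have hstar0 : g' xstar = 0 := by
    have hloc : IsLocalMin g xstar := (isMinOn_iff.2 fun y _ => hmin y).isLocalMin
      (Filter.univ_mem)
    have := hloc.hasFDerivAt_eq_zero (hgrad xstar).hasFDerivAt
    have h2 : (InnerProductSpace.toDual ℝ (EuclideanSpace ℝ (Fin d))) (g' xstar)
        = (InnerProductSpace.toDual ℝ (EuclideanSpace ℝ (Fin d))) 0 := by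
      simpa using this
    exact (InnerProductSpace.toDual ℝ _).injective h2
  -- descent at x*
  have hdx : g x ≤ g xstar + L / 2 * ‖x - xstar‖ ^ 2 := by
    have := descent g g' L hL.le hgrad hlip xstar x
    simpa [hstar0] using this
  -- descent step
  set z := x - lam • g' x with hz
  have hzx : z - x = -(lam • g' x) := by simp [hz]
  have hdz : g z ≤ g x - lam * (1 - α / 2) * ‖g' x‖ ^ 2 := by
    have := descent g g' L hL.le hgrad hlip x z
    rw [hzx] at this
    have hin : ⟪g' x, -(lam • g' x)⟫ = -(lam * ‖g' x‖ ^ 2) := by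
      rw [inner_neg_right, real_inner_smul_right, real_inner_self_eq_norm_sq]
      try ring
    have hnrm : ‖-(lam • g' x)‖ ^ 2 = lam ^ 2 * ‖g' x‖ ^ 2 := by
      rw [norm_neg, norm_smul]
      simp [abs_of_pos hlam]
      ring
    rw [hin, hnrm] at this
    have : g z ≤ g x - lam * ‖g' x‖ ^ 2 + L / 2 * (lam ^ 2 * ‖g' x‖ ^ 2) := by linarith
    have hα' : L / 2 * (lam ^ 2 * ‖g' x‖ ^ 2) = lam * (α / 2) * ‖g' x‖ ^ 2 := by
      rw [hα]; ring
    linarith [hα' ▸ this]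
  -- combine
  have hkey : lam * (1 - α / 2) * ‖g' x‖ ^ 2 ≤ L / 2 * ‖x - xstar‖ ^ 2 := by
    have := hmin z
    linarith
  -- square the goal
  have hgoal2 : ‖x - z‖ ^ 2 ≤ α / (2 - α) * ‖x - xstar‖ ^ 2 := by
    have hxz : ‖x - z‖ ^ 2 = lam ^ 2 * ‖g' x‖ ^ 2 := by
      have : x - z = lam • g' x := by simp [hz]
      rw [this, norm_smul]
      simp [abs_of_pos hlam]
      try ring
    rw [hxz]
    have h1 : lam * (1 - α / 2) = lam * (2 - α) / 2 := by ring
    have h2 : lam ^ 2 * ‖g' x‖ ^ 2 = (lam * (2 - α) / 2 * ‖g' x‖ ^ 2) * (2 * lam / (2 - α)) := by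
      field_simp
    rw [h2]
    calc (lam * (2 - α) / 2 * ‖g' x‖ ^ 2) * (2 * lam / (2 - α))
        ≤ (L / 2 * ‖x - xstar‖ ^ 2) * (2 * lam / (2 - α)) := by
          apply mul_le_mul_of_nonneg_right (h1 ▸ hkey)
          positivity
      _ = α / (2 - α) * ‖x - xstar‖ ^ 2 := by
          have hne : (2 : ℝ) - lam * L ≠ 0 := by rw [hα] at h2α; linarith
          rw [hα]
          field_simp [hne]
  calc ‖x - z‖ = Real.sqrt (‖x - z‖ ^ 2) := by
        rw [Real.sqrt_sq (norm_nonneg _)]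
    _ ≤ Real.sqrt (α / (2 - α) * ‖x - xstar‖ ^ 2) := Real.sqrt_le_sqrt hgoal2
    _ = Real.sqrt (α / (2 - α)) * ‖x - xstar‖ := by
        rw [Real.sqrt_mul (by positivity), Real.sqrt_sq (norm_nonneg _)]
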